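/- Let K < 0 be a real number and let f: ℝ → ℝ be C² with f(t) > 0 and f''(t) + K f(t) ≤ 0 for all t ∈ ℝ. If sup over t ∈ ℝ of (f'(t)² + K f(t)²) ≥ 0, then sup over t ∈ ℝ of (f'(t)² + K f(t)²) = 0 and inf over t ∈ ℝ of f(t) = 0. -/

import Mathlib

/-- Core lemma (forward direction): if the "energy" `(f')² + K f²` at some point `t₀`
exceeds `K m²` where `m` is a nonnegative lower bound for `f`, and `f' t₀ < 0`,
we get a contradiction. -/
lemma statement_5_aux (K : ℝ) (hK : K < 0) (f : ℝ → ℝ)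
    (hfd : Differentiable ℝ f) (hf'd : Differentiable ℝ (deriv f))
    (hf'c : Continuous (deriv f))
    (hpos : ∀ t, 0 < f t)
    (hineq : ∀ t, deriv (deriv f) t + K * f t ≤ 0)
    (m : ℝ) (hm0 : 0 ≤ m) (hmle : ∀ t, m ≤ f t)
    (t₀ : ℝ) (hd : deriv f t₀ < 0)
    (hE : K * m ^ 2 < deriv f t₀ ^ 2 + K * f t₀ ^ 2) : False := by
  set w : ℝ → ℝ := fun t => deriv f t ^ 2 + K * f t ^ 2 with hw_def
  have hw : ∀ t, HasDerivAt w (2 * deriv f t * (deriv (deriv f) t + K * f t)) t := by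
    intro t
    have h1 : HasDerivAt (fun s => deriv f s ^ 2)
        ((2 : ℕ) * deriv f t ^ (2 - 1) * deriv (deriv f) t) t :=
      (hf'd t).hasDerivAt.pow 2
    have h2 : HasDerivAt (fun s => K * f s ^ 2)
        (K * ((2 : ℕ) * f t ^ (2 - 1) * deriv f t)) t :=
      ((hfd t).hasDerivAt.pow 2).const_mul K
    have := h1.add h2
    refine this.congr_deriv ?_
    push_cast
    ring
  have hwdiff : Differentiable ℝ w := fun t => (hw t).differentiableAt
  have hwderiv : ∀ t, deriv w t = 2 * deriv f t * (deriv (deriv f) t + K * f t) :=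
    fun t => (hw t).deriv
  have hwcont : Continuous w := hwdiff.continuous
  -- derivative of w is nonneg wherever f' ≤ 0
  have hwnn : ∀ t, deriv f t ≤ 0 → 0 ≤ deriv w t := by
    intro t ht
    rw [hwderiv t]
    have h1 : 2 * deriv f t ≤ 0 := by linarith
    nlinarith [mul_nonneg (neg_nonneg.mpr h1) (neg_nonneg.mpr (hineq t))]
  have hKm : ∀ t, K * f t ^ 2 ≤ K * m ^ 2 := by
    intro t
    have h1 : m ^ 2 ≤ f t ^ 2 := by nlinarith [hmle t]
    nlinarith
  by_cases hB : ∃ t₁, t₀ ≤ t₁ ∧ 0 ≤ deriv f t₁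
  · -- there is a zero of f' after t₀; take the first one
    obtain ⟨t₁, ht₁, ht₁'⟩ := hB
    have hz : ∃ z ∈ Set.Icc t₀ t₁, deriv f z = 0 := by
      have := intermediate_value_Icc ht₁ (hf'c.continuousOn (s := Set.Icc t₀ t₁))
      have h0 : (0 : ℝ) ∈ Set.Icc (deriv f t₀) (deriv f t₁) := ⟨le_of_lt hd, ht₁'⟩
      obtain ⟨z, hz, hz'⟩ := this h0
      exact ⟨z, hz, hz'⟩
    set B : Set ℝ := Set.Ici t₀ ∩ deriv f ⁻¹' {0} with hB_def
    have hBne : B.Nonempty := by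
      obtain ⟨z, hz, hz'⟩ := hz
      exact ⟨z, hz.1, hz'⟩
    have hBclosed : IsClosed B := isClosed_Ici.inter (isClosed_singleton.preimage hf'c)
    have hBbdd : BddBelow B := ⟨t₀, fun x hx => hx.1⟩
    set T := sInf B with hT_def
    have hTB : T ∈ B := hBclosed.csInf_mem hBne hBbdd
    have hT0 : deriv f T = 0 := hTB.2
    have hTt₀ : t₀ < T := by
      rcases lt_or_eq_of_le (Set.mem_Ici.mp hTB.1) with h | h
      · exact h
      · exact absurd (h ▸ hT0) (ne_of_lt hd)
    -- f' < 0 on [t₀, T)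
    have hneg : ∀ s ∈ Set.Ico t₀ T, deriv f s < 0 := by
      intro s hs
      by_contra h
      push_neg at h
      rcases lt_or_eq_of_le h with h' | h'
      · obtain ⟨z, hz, hz'⟩ := intermediate_value_Icc hs.1
          (hf'c.continuousOn (s := Set.Icc t₀ s)) ⟨le_of_lt hd, le_of_lt h'⟩
        have : T ≤ z := csInf_le hBbdd ⟨hz.1, hz'⟩
        linarith [hz.2, hs.2]
      · have : T ≤ s := csInf_le hBbdd ⟨hs.1, h'.symm⟩
        linarith [hs.2]
    have hmono : MonotoneOn w (Set.Icc t₀ T) := by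
      apply monotoneOn_of_deriv_nonneg (convex_Icc t₀ T) hwcont.continuousOn
        (hwdiff.differentiableOn)
      intro x hx
      rw [interior_Icc] at hx
      exact hwnn x (le_of_lt (hneg x ⟨le_of_lt hx.1, hx.2⟩))
    have h1 : w t₀ ≤ w T :=
      hmono ⟨le_refl t₀, le_of_lt hTt₀⟩ ⟨le_of_lt hTt₀, le_refl T⟩ (le_of_lt hTt₀)
    have h2 : w T = K * f T ^ 2 := by simp [hw_def, hT0]
    have := hKm T
    simp only [hw_def] at h1
    nlinarith
  · -- f' < 0 on all of [t₀, ∞)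
    push_neg at hB
    set c := deriv f t₀ ^ 2 + K * f t₀ ^ 2 - K * m ^ 2 with hc_def
    have hc : 0 < c := by simp only [hc_def]; linarith
    have hmono : MonotoneOn w (Set.Ici t₀) := by
      apply monotoneOn_of_deriv_nonneg (convex_Ici t₀) hwcont.continuousOn
        (hwdiff.differentiableOn)
      intro x hx
      rw [interior_Ici] at hx
      exact hwnn x (le_of_lt (hB x (le_of_lt hx)))
    have hsq : ∀ t, t₀ ≤ t → c ≤ deriv f t ^ 2 := by
      intro t ht
      have h1 : w t₀ ≤ w t := hmono (Set.self_mem_Ici) ht ht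
      have h2 := hKm t
      simp only [hw_def] at h1
      nlinarith
    have hle : ∀ t, t₀ ≤ t → deriv f t ≤ -Real.sqrt c := by
      intro t ht
      have h1 := hsq t ht
      have h2 := hB t ht
      nlinarith [Real.sq_sqrt (le_of_lt hc), Real.sqrt_nonneg c]
    have hsc : 0 < Real.sqrt c := Real.sqrt_pos.mpr hc
    -- φ = f + √c * id is antitone on [t₀, ∞)
    set φ : ℝ → ℝ := fun t => f t + Real.sqrt c * t with hφ_def
    have hφd : ∀ t, HasDerivAt φ (deriv f t + Real.sqrt c) t := by
      intro t
      exact ((hfd t).hasDerivAt.add ((hasDerivAt_id t).const_mul (Real.sqrt c))).congr_deriv (by simp)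
    have hφmono : AntitoneOn φ (Set.Ici t₀) := by
      apply antitoneOn_of_deriv_nonpos (convex_Ici t₀)
        (fun t _ => (hφd t).differentiableAt.continuousAt.continuousWithinAt)
        (fun t _ => (hφd t).differentiableAt.differentiableWithinAt)
      intro x hx
      rw [interior_Ici] at hx
      rw [(hφd x).deriv]
      linarith [hle x (le_of_lt hx)]
    set t₂ := t₀ + f t₀ / Real.sqrt c with ht₂_def
    have ht₂ : t₀ ≤ t₂ := by
      have : 0 < f t₀ / Real.sqrt c := div_pos (hpos t₀) hsc
      simp only [ht₂_def]; linarith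
    have h1 : φ t₂ ≤ φ t₀ := hφmono Set.self_mem_Ici ht₂ ht₂
    simp only [hφ_def, ht₂_def] at h1
    have h2 : Real.sqrt c * (f t₀ / Real.sqrt c) = f t₀ := by
      field_simp
    nlinarith [hpos (t₀ + f t₀ / Real.sqrt c)]

/-- For `K < 0` and a positive `C²` solution of `f'' + K f ≤ 0` on `ℝ`, if
`sup ((f')² + K f²) ≥ 0` then this supremum is `0` and `inf f = 0`. -/
theorem statement_5 (K : ℝ) (hK : K < 0) (f : ℝ → ℝ) (hf : ContDiff ℝ 2 f)
    (hpos : ∀ t, 0 < f t)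
    (hineq : ∀ t, deriv (deriv f) t + K * f t ≤ 0)
    (hsup : 0 ≤ sSup (Set.range fun t => deriv f t ^ 2 + K * f t ^ 2)) :
    sSup (Set.range fun t => deriv f t ^ 2 + K * f t ^ 2) = 0 ∧
    sInf (Set.range f) = 0 := by
  have hfd : Differentiable ℝ f := hf.differentiable (by norm_num)
  have h2 : ContDiff ℝ ((1 : WithTop ℕ∞) + 1) f := by exact_mod_cast hf
  have hf'1 : ContDiff ℝ 1 (deriv f) := (contDiff_succ_iff_deriv.mp h2).2.2
  have hf'd : Differentiable ℝ (deriv f) := hf'1.differentiable one_ne_zero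
  have hf'c : Continuous (deriv f) := hf'd.continuous
  set m := sInf (Set.range f) with hm_def
  have hbdd : BddBelow (Set.range f) := ⟨0, by rintro x ⟨t, rfl⟩; exact le_of_lt (hpos t)⟩
  have hm0 : 0 ≤ m := le_csInf (Set.range_nonempty f)
    (by rintro x ⟨t, rfl⟩; exact le_of_lt (hpos t))
  have hmle : ∀ t, m ≤ f t := fun t => csInf_le hbdd ⟨t, rfl⟩
  -- key: energy bounded above by K m²
  have key : ∀ t, deriv f t ^ 2 + K * f t ^ 2 ≤ K * m ^ 2 := by
    intro t
    by_contra h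
    push_neg at h
    rcases lt_trichotomy (deriv f t) 0 with hd | hd | hd
    · exact statement_5_aux K hK f hfd hf'd hf'c hpos hineq m hm0 hmle t hd h
    · rw [hd] at h
      have h1 : m ^ 2 ≤ f t ^ 2 := by nlinarith [hmle t]
      nlinarith
    · -- reflect: apply the lemma to g = f ∘ neg
      set g : ℝ → ℝ := fun s => f (-s) with hg_def
      have hgd' : ∀ s, HasDerivAt g (-deriv f (-s)) s := by
        intro s
        have := ((hfd (-s)).hasDerivAt.comp s (hasDerivAt_neg s))
        exact this.congr_deriv (by simp)
      have hgderiv : deriv g = fun s => -deriv f (-s) := funext fun s => (hgd' s).deriv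
      have hgd : Differentiable ℝ g := fun s => (hgd' s).differentiableAt
      have hgd2' : ∀ s, HasDerivAt (deriv g) (deriv (deriv f) (-s)) s := by
        intro s
        rw [hgderiv]
        have := ((hf'd (-s)).hasDerivAt.comp s (hasDerivAt_neg s)).neg
        exact this.congr_deriv (by simp)
      have hgderiv2 : ∀ s, deriv (deriv g) s = deriv (deriv f) (-s) :=
        fun s => (hgd2' s).deriv
      have hgd2 : Differentiable ℝ (deriv g) := fun s => (hgd2' s).differentiableAt
      have hgc : Continuous (deriv g) := hgd2.continuous
      apply statement_5_aux K hK g hgd hgd2 hgc (fun s => hpos (-s))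
        (fun s => by rw [hgderiv2]; exact hineq (-s)) m hm0 (fun s => hmle (-s)) (-t)
      · rw [hgderiv]; simp; linarith
      · rw [hgderiv]; simp only [hg_def, neg_neg]
        nlinarith
  have hsup_le : sSup (Set.range fun t => deriv f t ^ 2 + K * f t ^ 2) ≤ K * m ^ 2 := by
    apply csSup_le (Set.range_nonempty _)
    rintro x ⟨t, rfl⟩
    exact key t
  have h0 : 0 ≤ K * m ^ 2 := le_trans hsup hsup_le
  have hm_zero : m = 0 := by
    by_contra hmne
    have hmp : 0 < m := lt_of_le_of_ne hm0 (Ne.symm hmne)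
    nlinarith [mul_pos hmp hmp]
  constructor
  · have hz : K * m ^ 2 = 0 := by rw [hm_zero]; ring
    linarith
  · exact hm_zero.symm ▸ rfl
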